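/- Let ν be a finite signed Borel measure on ℝ satisfying conditions (A1) and (A2). Then the function f_ν is right-continuous on ℝ: for every x₀ ∈ ℝ, f_ν(x) → f_ν(x₀) as x → x₀ from the right. -/

import Mathlib

open MeasureTheory
open scoped ENNReal

/-- The atomic part of ν evaluated on (−∞, x]: ν_d((−∞,x]) = ∑_{y ∈ D, y ≤ x} ν({y}). -/
noncomputable def atomicPartIic (ν : MeasureTheory.SignedMeasure ℝ) (x : ℝ) : ℝ :=
  ∑' y : {y : ℝ // ν {y} ≠ 0 ∧ y ≤ x}, ν {(y : ℝ)}

/-- ν^c((−∞, x]), where ν^c := ν − ν_d is the atomless part of ν. -/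
noncomputable def contPartIic (ν : MeasureTheory.SignedMeasure ℝ) (x : ℝ) : ℝ :=
  ν (Set.Iic x) - atomicPartIic ν x

/-- The function f_ν(x) := exp(−2 ν^c((−∞, x])) · ∏_{y ∈ D, y ≤ x} (1 − ν({y}))/(1 + ν({y})). -/
noncomputable def fnu (ν : MeasureTheory.SignedMeasure ℝ) (x : ℝ) : ℝ :=
  Real.exp (-2 * contPartIic ν x) *
    ∏' y : {y : ℝ // ν {y} ≠ 0 ∧ y ≤ x}, (1 - ν {(y : ℝ)}) / (1 + ν {(y : ℝ)})

section FnuAux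

open Filter Set Topology

namespace FnuProof

lemma tvFin (ν : SignedMeasure ℝ) : IsFiniteMeasure ν.totalVariation := by
  show IsFiniteMeasure (ν.toJordanDecomposition.posPart + ν.toJordanDecomposition.negPart)
  infer_instance

lemma abs_apply_le (ν : SignedMeasure ℝ) {s : Set ℝ} (hs : MeasurableSet s) :
    |ν s| ≤ (ν.totalVariation s).toReal := by
  have h2 : ν s = (ν.toJordanDecomposition.posPart s).toReal
      - (ν.toJordanDecomposition.negPart s).toReal := by
    conv_lhs => rw [← ν.toSignedMeasure_toJordanDecomposition]
    rw [JordanDecomposition.toSignedMeasure, VectorMeasure.sub_apply,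
      Measure.toSignedMeasure_apply_measurable hs, Measure.toSignedMeasure_apply_measurable hs]
    rfl
  have h3 : (ν.totalVariation s).toReal = (ν.toJordanDecomposition.posPart s).toReal
      + (ν.toJordanDecomposition.negPart s).toReal := by
    simp only [SignedMeasure.totalVariation, Measure.add_apply]
    rw [ENNReal.toReal_add (measure_ne_top _ _) (measure_ne_top _ _)]
  rw [h2, h3]
  have u1 := ENNReal.toReal_nonneg (a := ν.toJordanDecomposition.posPart s)
  have u2 := ENNReal.toReal_nonneg (a := ν.toJordanDecomposition.negPart s)
  exact abs_le.mpr ⟨by linarith, by linarith⟩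

lemma countable_atoms (ν : SignedMeasure ℝ) : Set.Countable {y : ℝ | ν {y} ≠ 0} := by
  haveI := tvFin ν
  have h : {y : ℝ | ν {y} ≠ 0} ⊆ {y : ℝ | 0 < ν.totalVariation {y}} := by
    intro y hy
    simp only [mem_setOf_eq] at *
    rcases eq_or_ne (ν.totalVariation {y}) 0 with h0 | h0
    · exact absurd (ν.null_of_totalVariation_zero h0) hy
    · exact h0.bot_lt
  refine Set.Countable.mono h ?_
  have := Measure.countable_meas_level_set_pos (μ := ν.totalVariation)
    (g := (id : ℝ → ℝ)) measurable_id
  simpa [Set.setOf_eq_eq_singleton] using this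

lemma tsum_singleton_eq (μ : Measure ℝ) {s : Set ℝ} (hs : s.Countable) :
    ∑' y : s, μ {(y : ℝ)} = μ s := by
  have := tsum_measure_preimage_singleton (μ := μ) hs (f := id)
    (fun y _ => measurableSet_singleton y)
  simpa using this

lemma key_bound (ν : SignedMeasure ℝ) (f : ℝ → ℝ) (A : Set ℝ) (C : ℝ) (hC : 0 ≤ C)
    (hf : ∀ y, ν {y} ≠ 0 → y ∈ A → |f y| ≤ C * (ν.totalVariation {y}).toReal) :
    Summable (indicator {y | ν {y} ≠ 0 ∧ y ∈ A} f) ∧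
    |∑' y, indicator {y | ν {y} ≠ 0 ∧ y ∈ A} f y| ≤ C * (ν.totalVariation A).toReal := by
  haveI := tvFin ν
  set s := {y : ℝ | ν {y} ≠ 0 ∧ y ∈ A} with hs
  have hsc : s.Countable := (countable_atoms ν).mono (fun y hy => hy.1)
  have henn : ∑' y : s, ν.totalVariation {(y : ℝ)} = ν.totalVariation s :=
    tsum_singleton_eq _ hsc
  have hle : ν.totalVariation s ≤ ν.totalVariation A := measure_mono (fun y hy => hy.2)
  have hne : ∑' y : s, ν.totalVariation {(y : ℝ)} ≠ ⊤ := by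
    rw [henn]; exact (hle.trans_lt (measure_lt_top _ A)).ne
  have hsumg : Summable (fun y : s => (ν.totalVariation {(y : ℝ)}).toReal) :=
    ENNReal.summable_toReal hne
  have htsumg : ∑' y : s, (ν.totalVariation {(y : ℝ)}).toReal ≤ (ν.totalVariation A).toReal := by
    rw [← ENNReal.tsum_toReal_eq (fun _ => measure_ne_top _ _), henn]
    exact ENNReal.toReal_mono (measure_ne_top _ A) hle
  have hfs : Summable (fun y : s => f y) := by
    apply Summable.of_norm_bounded (hsumg.mul_left C)
    rintro ⟨y, hy1, hy2⟩
    simpa [Real.norm_eq_abs] using hf y hy1 hy2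
  refine ⟨summable_subtype_iff_indicator.mp hfs, ?_⟩
  rw [← tsum_subtype]
  have habs : Summable (fun y : s => |f y|) := hfs.abs
  have hnorm : |∑' y : s, f y| ≤ ∑' y : s, |f y| := by
    have := norm_tsum_le_tsum_norm (f := fun y : s => f y)
      (by simpa [Real.norm_eq_abs] using habs)
    simpa [Real.norm_eq_abs] using this
  calc |∑' y : s, f y| ≤ ∑' y : s, |f y| := hnorm
    _ ≤ ∑' y : s, C * (ν.totalVariation {(y : ℝ)}).toReal :=
        Summable.tsum_le_tsum (fun z => hf z.1 z.2.1 z.2.2) habs (hsumg.mul_left C)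
    _ = C * ∑' y : s, (ν.totalVariation {(y : ℝ)}).toReal := tsum_mul_left
    _ ≤ C * (ν.totalVariation A).toReal := mul_le_mul_of_nonneg_left htsumg hC

lemma tsum_split (ν : SignedMeasure ℝ) (f : ℝ → ℝ) {x₀ x : ℝ} (hx : x₀ ≤ x)
    (h₀ : Summable (indicator {y | ν {y} ≠ 0 ∧ y ∈ Iic x₀} f))
    (h₁ : Summable (indicator {y | ν {y} ≠ 0 ∧ y ∈ Ioc x₀ x} f)) :
    Summable (indicator {y | ν {y} ≠ 0 ∧ y ∈ Iic x} f) ∧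
    ∑' y, indicator {y | ν {y} ≠ 0 ∧ y ∈ Iic x} f y
      = ∑' y, indicator {y | ν {y} ≠ 0 ∧ y ∈ Iic x₀} f y
        + ∑' y, indicator {y | ν {y} ≠ 0 ∧ y ∈ Ioc x₀ x} f y := by
  have hset : {y | ν {y} ≠ 0 ∧ y ∈ Iic x}
      = {y | ν {y} ≠ 0 ∧ y ∈ Iic x₀} ∪ {y | ν {y} ≠ 0 ∧ y ∈ Ioc x₀ x} := by
    ext y
    simp only [mem_setOf_eq, mem_union, mem_Iic, mem_Ioc]
    constructor
    · rintro ⟨h1, h3⟩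
      rcases le_or_gt y x₀ with h2 | h2
      · exact Or.inl ⟨h1, h2⟩
      · exact Or.inr ⟨h1, h2, h3⟩
    · rintro (⟨h1, h2⟩ | ⟨h1, h2, h3⟩)
      exacts [⟨h1, h2.trans hx⟩, ⟨h1, h3⟩]
  have hdisj : Disjoint {y | ν {y} ≠ 0 ∧ y ∈ Iic x₀} {y | ν {y} ≠ 0 ∧ y ∈ Ioc x₀ x} := by
    rw [Set.disjoint_left]
    rintro y ⟨h1, h2⟩ ⟨h3, h4, h5⟩
    exact absurd h4 (not_lt.2 h2)
  have hpt : indicator {y | ν {y} ≠ 0 ∧ y ∈ Iic x} f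
      = indicator {y | ν {y} ≠ 0 ∧ y ∈ Iic x₀} f
        + indicator {y | ν {y} ≠ 0 ∧ y ∈ Ioc x₀ x} f := by
    rw [hset]
    exact Set.indicator_union_of_disjoint hdisj f
  constructor
  · rw [hpt]; exact h₀.add h₁
  · rw [hpt]
    exact Summable.tsum_add h₀ h₁

lemma abs_log_le {t : ℝ} (h : |t| ≤ 1/2) :
    |Real.log ((1 - t) / (1 + t))| ≤ 4 * |t| := by
  have h1 : |t| < 1 := lt_of_le_of_lt h (by norm_num)
  have ha := Real.abs_log_sub_add_sum_range_le h1 0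
  have hb := Real.abs_log_sub_add_sum_range_le (x := -t) (by rwa [abs_neg]) 0
  simp only [Finset.range_zero, Finset.sum_empty, zero_add, pow_one, abs_neg,
    sub_neg_eq_add] at ha hb
  have habs := abs_le.1 h
  have hd : |t| / (1 - |t|) ≤ 2 * |t| := by
    rw [div_le_iff₀ (by linarith)]
    nlinarith [abs_nonneg t]
  have h0 : (0:ℝ) < 1 - t := by linarith [habs.2]
  have h0' : (0:ℝ) < 1 + t := by linarith [habs.1]
  rw [Real.log_div (by linarith) (by linarith)]
  have htri := abs_sub (Real.log (1 - t)) (Real.log (1 + t))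
  linarith

lemma finite_big_atoms (ν : SignedMeasure ℝ) :
    {y : ℝ | (2:ℝ≥0∞)⁻¹ < ν.totalVariation {y}}.Finite := by
  haveI := tvFin ν
  have := Measure.finite_const_le_meas_of_disjoint_iUnion (μ := ν.totalVariation)
    (ε := 2⁻¹) (by norm_num) (As := fun y : ℝ => {y}) (fun y => measurableSet_singleton y)
    (fun i j h => by simpa using h) (measure_ne_top _ _)
  exact this.subset (fun y hy => le_of_lt (α := ℝ≥0∞) hy)

lemma summable_nu (ν : SignedMeasure ℝ) (A : Set ℝ) :
    Summable (indicator {y | ν {y} ≠ 0 ∧ y ∈ A} (fun y => ν {y})) :=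
  (key_bound ν _ A 1 zero_le_one (fun y _ _ => by
    simpa using abs_apply_le ν (measurableSet_singleton y))).1

lemma toReal_singleton_le_half (ν : SignedMeasure ℝ) {y : ℝ}
    (hy : ¬ (2:ℝ≥0∞)⁻¹ < ν.totalVariation {y}) :
    (ν.totalVariation {y}).toReal ≤ 1 / 2 := by
  haveI := tvFin ν
  push_neg at hy
  have := ENNReal.toReal_mono (by norm_num) hy
  simpa using this

lemma log_bound_of_small (ν : SignedMeasure ℝ) {y : ℝ}
    (hy : (ν.totalVariation {y}).toReal ≤ 1 / 2) :
    |Real.log ((1 - ν {y}) / (1 + ν {y}))| ≤ 4 * (ν.totalVariation {y}).toReal := by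
  have h1 : |ν {y}| ≤ (ν.totalVariation {y}).toReal :=
    abs_apply_le ν (measurableSet_singleton y)
  calc |Real.log ((1 - ν {y}) / (1 + ν {y}))| ≤ 4 * |ν {y}| :=
        abs_log_le (h1.trans hy)
    _ ≤ 4 * (ν.totalVariation {y}).toReal := by linarith

lemma summable_log (ν : SignedMeasure ℝ) (x : ℝ) :
    Summable (indicator {y | ν {y} ≠ 0 ∧ y ∈ Iic x}
      (fun y => Real.log ((1 - ν {y}) / (1 + ν {y})))) := by
  set E := {y : ℝ | (2:ℝ≥0∞)⁻¹ < ν.totalVariation {y}} with hE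
  set f := fun y => Real.log ((1 - ν {y}) / (1 + ν {y})) with hf
  set S := {y | ν {y} ≠ 0 ∧ y ∈ Iic x} with hS
  have hEfin : E.Finite := finite_big_atoms ν
  have hsplit : indicator S f = indicator (S \ E) f + indicator (S ∩ E) f := by
    funext y
    by_cases hy : y ∈ S
    · by_cases hyE : y ∈ E
      · simp [indicator_apply, hy, hyE]
      · simp [indicator_apply, hy, hyE]
    · simp [indicator_apply, hy, fun h : y ∈ S \ E => hy h.1, fun h : y ∈ S ∩ E => hy h.1]
  rw [hsplit]
  have h1 : Summable (indicator (S \ E) f) := by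
    have hset : S \ E = {y | ν {y} ≠ 0 ∧ y ∈ (Iic x \ E)} := by
      ext y
      simp only [mem_diff, mem_setOf_eq, hS]
      tauto
    rw [hset]
    refine (key_bound ν f (Iic x \ E) 4 (by norm_num) (fun y _ hyA => ?_)).1
    exact log_bound_of_small ν (toReal_singleton_le_half ν hyA.2)
  have h2 : Summable (indicator (S ∩ E) f) := by
    apply summable_of_ne_finset_zero (s := (hEfin.subset inter_subset_right).toFinset)
    intro y hy
    rw [Set.Finite.mem_toFinset] at hy
    exact indicator_of_notMem hy f
  exact h1.add h2

lemma hasProd_exp {ι : Type*} {f : ι → ℝ} {a : ℝ} (h : HasSum f a) :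
    HasProd (fun i => Real.exp (f i)) (Real.exp a) := by
  have := (Real.continuous_exp.continuousAt (x := a)).tendsto.comp h
  unfold HasProd
  unfold HasSum at this
  simpa [Function.comp_def, Real.exp_sum] using this

noncomputable def aP (ν : SignedMeasure ℝ) (x : ℝ) : ℝ :=
  ∑' y, indicator {y | ν {y} ≠ 0 ∧ y ∈ Iic x} (fun y => ν {y}) y

noncomputable def lP (ν : SignedMeasure ℝ) (x : ℝ) : ℝ :=
  ∑' y, indicator {y | ν {y} ≠ 0 ∧ y ∈ Iic x}
    (fun y => Real.log ((1 - ν {y}) / (1 + ν {y}))) y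

lemma pos_factor (ν : SignedMeasure ℝ) (hA1 : ∀ a : ℝ, ν.totalVariation {a} < 1) (y : ℝ) :
    0 < (1 - ν {y}) / (1 + ν {y}) := by
  have h1 : |ν {y}| ≤ (ν.totalVariation {y}).toReal := abs_apply_le ν (measurableSet_singleton y)
  have h2 : (ν.totalVariation {y}).toReal < 1 := by
    have := ENNReal.toReal_strict_mono (by simp) (hA1 y)
    simpa using this
  have h3 := abs_lt.1 (h1.trans_lt h2)
  exact div_pos (by linarith) (by linarith)

lemma fnu_eq (ν : SignedMeasure ℝ) (hA1 : ∀ a : ℝ, ν.totalVariation {a} < 1) (x : ℝ) :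
    fnu ν x = Real.exp (-2 * (ν (Set.Iic x) - aP ν x) + lP ν x) := by
  have haP : atomicPartIic ν x = aP ν x := by
    rw [atomicPartIic, aP]
    exact tsum_subtype {y : ℝ | ν {y} ≠ 0 ∧ y ∈ Iic x} (fun y => ν {y})
  have hsum := summable_log ν x
  have hsub : Summable (fun y : {y : ℝ | ν {y} ≠ 0 ∧ y ∈ Iic x} =>
      Real.log ((1 - ν {(y : ℝ)}) / (1 + ν {(y : ℝ)}))) :=
    summable_subtype_iff_indicator.mpr hsum
  have hL : lP ν x = ∑' y : {y : ℝ | ν {y} ≠ 0 ∧ y ∈ Iic x},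
      Real.log ((1 - ν {(y : ℝ)}) / (1 + ν {(y : ℝ)})) := by
    rw [lP]
    exact (tsum_subtype {y : ℝ | ν {y} ≠ 0 ∧ y ∈ Iic x}
      (fun y => Real.log ((1 - ν {y}) / (1 + ν {y})))).symm
  have hhs : HasSum (fun y : {y : ℝ | ν {y} ≠ 0 ∧ y ∈ Iic x} =>
      Real.log ((1 - ν {(y : ℝ)}) / (1 + ν {(y : ℝ)}))) (lP ν x) := by
    rw [hL]
    exact hsub.hasSum
  have hprod := hasProd_exp hhs
  have hfe : (fun y : {y : ℝ | ν {y} ≠ 0 ∧ y ∈ Iic x} =>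
      Real.exp (Real.log ((1 - ν {(y : ℝ)}) / (1 + ν {(y : ℝ)}))))
      = fun y : {y : ℝ | ν {y} ≠ 0 ∧ y ∈ Iic x} => (1 - ν {(y : ℝ)}) / (1 + ν {(y : ℝ)}) :=
    funext fun y => Real.exp_log (pos_factor ν hA1 y)
  rw [hfe] at hprod
  have htp : (∏' y : {y : ℝ // ν {y} ≠ 0 ∧ y ≤ x}, (1 - ν {(y : ℝ)}) / (1 + ν {(y : ℝ)}))
      = Real.exp (lP ν x) := hprod.tprod_eq
  rw [fnu, contPartIic, haP, htp, ← Real.exp_add]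

end FnuProof

end FnuAux

open FnuProof Filter Set Topology in
/-- Under (A1) (and (A2), automatic for a signed measure), the function
f_ν is right-continuous: for every x₀ ∈ ℝ, f_ν(x) → f_ν(x₀) as x → x₀ from the right. -/
theorem fnu_rightContinuous (ν : MeasureTheory.SignedMeasure ℝ)
    (hA1 : ∀ a : ℝ, ν.totalVariation {a} < 1) :
    ∀ x₀ : ℝ, Filter.Tendsto (fnu ν) (nhdsWithin x₀ (Set.Ioi x₀)) (nhds (fnu ν x₀)) := by
  intro x₀
  haveI := tvFin ν
  set μ := ν.totalVariation with hμdef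
  have h1 : Tendsto (fun r => μ (Ioc x₀ r)) (𝓝[>] x₀) (𝓝 (μ (⋂ r > x₀, Ioc x₀ r))) :=
    tendsto_measure_biInter_gt (fun r _ => measurableSet_Ioc.nullMeasurableSet)
      (fun i j _ hij => Ioc_subset_Ioc_right hij) ⟨x₀ + 1, by linarith, measure_ne_top _ _⟩
  have hempty : (⋂ r > x₀, Ioc x₀ r) = ∅ := by
    ext y
    simp only [mem_iInter, mem_Ioc, mem_empty_iff_false, iff_false, not_forall]
    by_cases hy : x₀ < y
    · exact ⟨(x₀ + y) / 2, by linarith, fun hc => by linarith [hc.2]⟩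
    · exact ⟨x₀ + 1, by linarith, fun hc => hy hc.1⟩
  rw [hempty, measure_empty] at h1
  have hteps : Tendsto (fun x => (μ (Ioc x₀ x)).toReal) (𝓝[>] x₀) (𝓝 0) := by
    have h2 := (ENNReal.tendsto_toReal (a := 0) (by simp)).comp h1
    simpa [Function.comp_def] using h2
  have hev : ∀ᶠ x in 𝓝[>] x₀, (μ (Ioc x₀ x)).toReal < 1/2 :=
    hteps.eventually_lt_const (by norm_num)
  have hevx : ∀ᶠ x in 𝓝[>] x₀, x₀ < x := eventually_mem_nhdsWithin
  set G : ℝ → ℝ := fun x => -2 * (ν (Set.Iic x) - aP ν x) + lP ν x with hGdef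
  have hbound : ∀ x, x₀ < x → (μ (Ioc x₀ x)).toReal < 1/2 →
      |G x - G x₀| ≤ 8 * (μ (Ioc x₀ x)).toReal := by
    intro x hx hhalf
    set ε := (μ (Ioc x₀ x)).toReal with hεdef
    have hεnn : 0 ≤ ε := ENNReal.toReal_nonneg
    have hdisj : Disjoint (Iic x₀) (Ioc x₀ x) := by
      rw [Set.disjoint_left]
      rintro y h1 h2
      exact absurd h2.1 (not_lt.2 h1)
    have hunion : ν (Iic x) = ν (Iic x₀) + ν (Ioc x₀ x) := by
      have := VectorMeasure.of_union (v := ν) hdisj measurableSet_Iic measurableSet_Ioc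
      rwa [Iic_union_Ioc_eq_Iic hx.le] at this
    have hνb : |ν (Iic x) - ν (Iic x₀)| ≤ ε := by
      rw [hunion]
      simpa using abs_apply_le ν measurableSet_Ioc
    have hkb1 := key_bound ν (fun y => ν {y}) (Ioc x₀ x) 1 zero_le_one
      (fun y _ _ => by simpa using abs_apply_le ν (measurableSet_singleton y))
    have hsplit1 := tsum_split ν (fun y => ν {y}) hx.le (summable_nu ν (Iic x₀)) hkb1.1
    have haB : |aP ν x - aP ν x₀| ≤ ε := by
      rw [aP, aP, hsplit1.2]
      simpa using hkb1.2
    have hsmall : ∀ y, ν {y} ≠ 0 → y ∈ Ioc x₀ x → (μ {y}).toReal ≤ 1/2 := by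
      intro y _ hy
      have hmono : μ {y} ≤ μ (Ioc x₀ x) := measure_mono (singleton_subset_iff.mpr hy)
      exact (ENNReal.toReal_mono (measure_ne_top _ _) hmono).trans hhalf.le
    have hkb2 := key_bound ν (fun y => Real.log ((1 - ν {y}) / (1 + ν {y}))) (Ioc x₀ x) 4
      (by norm_num) (fun y hy1 hy2 => log_bound_of_small ν (hsmall y hy1 hy2))
    have hsplit2 := tsum_split ν (fun y => Real.log ((1 - ν {y}) / (1 + ν {y}))) hx.le
      (summable_log ν x₀) hkb2.1
    have hlB : |lP ν x - lP ν x₀| ≤ 4 * ε := by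
      rw [lP, lP, hsplit2.2]
      simpa using hkb2.2
    have e1 := abs_le.1 hνb
    have e2 := abs_le.1 haB
    have e3 := abs_le.1 hlB
    have hGx : G x - G x₀ = -2 * (ν (Set.Iic x) - ν (Set.Iic x₀))
        + 2 * (aP ν x - aP ν x₀) + (lP ν x - lP ν x₀) := by
      rw [hGdef]; ring
    rw [hGx]
    exact abs_le.mpr ⟨by linarith, by linarith⟩
  have hGdiff : Tendsto (fun x => G x - G x₀) (𝓝[>] x₀) (𝓝 0) := by
    have hb : ∀ᶠ x in 𝓝[>] x₀, ‖G x - G x₀‖ ≤ 8 * (μ (Ioc x₀ x)).toReal := by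
      filter_upwards [hev, hevx] with x h1 h2
      simpa [Real.norm_eq_abs] using hbound x h2 h1
    exact squeeze_zero_norm' hb (by simpa using hteps.const_mul (8:ℝ))
  have hG : Tendsto G (𝓝[>] x₀) (𝓝 (G x₀)) := by
    rwa [← tendsto_sub_nhds_zero_iff]
  have hfnu : fnu ν = fun x => Real.exp (G x) := funext (fun x => fnu_eq ν hA1 x)
  rw [hfnu]
  exact (Real.continuous_exp.tendsto (G x₀)).comp hG
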